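/- (Anderson–Hsiao bias under uniformly distributed coefficients) Let μ ∈ ℝ and a > 0 satisfy −1 < μ − a and μ + a ≤ 1, and set δ = a/(1+μ) and L = log((1+δ)/(1−δ)). Then L > a, and (∫_{μ−a}^{μ+a} x(1−x)/(1+x) dx) / (∫_{μ−a}^{μ+a} (1−x)/(1+x) dx) − μ = 2(1+μ)(δ − L/2)/(L − a). (The left-hand side is the asymptotic bias of the Anderson–Hsiao estimator when the heterogeneous AR(1) coefficients are uniformly distributed on [μ−a, μ+a] with mean μ, since the uniform normalizing constants cancel in the ratio.) -/

import Mathlib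

open Real intervalIntegral

/-- (Anderson–Hsiao bias under uniformly distributed coefficients)
Let `μ ∈ ℝ` and `a > 0` satisfy `−1 < μ − a` and `μ + a ≤ 1`, and set `δ = a/(1+μ)` and
`L = log((1+δ)/(1−δ))`. Then `L > a`, and
`(∫_{μ−a}^{μ+a} x(1−x)/(1+x) dx) / (∫_{μ−a}^{μ+a} (1−x)/(1+x) dx) − μ
  = 2(1+μ)(δ − L/2)/(L − a)`. -/
theorem ah_bias_uniform (μ a : ℝ) (ha : 0 < a) (hlo : -1 < μ - a) (hhi : μ + a ≤ 1)
    (δ L : ℝ) (hδ : δ = a / (1 + μ)) (hL : L = Real.log ((1 + δ) / (1 - δ))) :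
    a < L ∧
    (∫ x in (μ - a)..(μ + a), x * (1 - x) / (1 + x)) /
        (∫ x in (μ - a)..(μ + a), (1 - x) / (1 + x)) - μ =
      2 * (1 + μ) * (δ - L / 2) / (L - a) := by
  set p := μ - a with hp
  set q := μ + a with hq
  have hpq : p ≤ q := by simp [hp, hq]; linarith
  have h1p : (0:ℝ) < 1 + p := by simp [hp]; linarith
  have h1q : (0:ℝ) < 1 + q := by simp [hq]; linarith
  have hmpos : (0:ℝ) < 1 + μ := by linarith [h1p, ha]
  have haltm : a < 1 + μ := by simp [hp] at h1p; linarith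
  have hδpos : 0 < δ := by rw [hδ]; positivity
  have hδlt : δ < 1 := by
    rw [hδ, div_lt_one hmpos]; exact haltm
  have hδval : (1 + μ) * δ = a := by
    rw [hδ]; field_simp
  -- rewrite L as a difference of logs
  have hquot : (1 + δ) / (1 - δ) = (1 + q) / (1 + p) := by
    have h1 : 1 + δ = (1 + q) / (1 + μ) := by
      rw [hδ, hq]; field_simp; ring
    have h2 : 1 - δ = (1 + p) / (1 + μ) := by
      rw [hδ, hp]; field_simp; ring
    rw [h1, h2]
    rw [div_div_div_eq]
    have h1p' := ne_of_gt h1p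
    have hm' := ne_of_gt hmpos
    field_simp
  have hLval : L = Real.log (1 + q) - Real.log (1 + p) := by
    rw [hL, hquot, Real.log_div (ne_of_gt h1q) (ne_of_gt h1p)]
  -- L > a
  have haL : a < L := by
    have ht : 2 * δ / (1 + δ) ≠ 0 := by positivity
    have hexp := Real.add_one_lt_exp (x := -(2 * δ / (1 + δ))) (by simpa using ht)
    have h1δ : (0:ℝ) < 1 + δ := by linarith
    have heq : -(2 * δ / (1 + δ)) + 1 = (1 - δ) / (1 + δ) := by
      field_simp; ring
    rw [heq] at hexp
    have hlt : Real.exp (2 * δ / (1 + δ)) < (1 + δ) / (1 - δ) := by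
      rw [Real.exp_neg] at hexp
      have hepos : 0 < Real.exp (2 * δ / (1 + δ)) := Real.exp_pos _
      have h3 : (1 - δ) < (Real.exp (2 * δ / (1 + δ)))⁻¹ * (1 + δ) :=
        (div_lt_iff₀ h1δ).mp hexp
      rw [lt_div_iff₀ (by linarith : (0:ℝ) < 1 - δ)]
      have hinv : Real.exp (2 * δ / (1 + δ)) * (Real.exp (2 * δ / (1 + δ)))⁻¹ = 1 :=
        mul_inv_cancel₀ (ne_of_gt hepos)
      nlinarith [mul_lt_mul_of_pos_left h3 hepos]
    have hL2 : 2 * δ / (1 + δ) < L := by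
      rw [hL]
      calc 2 * δ / (1 + δ) = Real.log (Real.exp (2 * δ / (1 + δ))) := (Real.log_exp _).symm
        _ < Real.log ((1 + δ) / (1 - δ)) :=
          Real.log_lt_log (Real.exp_pos _) hlt
    have haux : a ≤ 2 * δ / (1 + δ) := by
      rw [le_div_iff₀ h1δ]
      nlinarith [hδval, hhi]
    linarith
  refine ⟨haL, ?_⟩
  -- compute the integrals
  have hcont : ∀ x ∈ Set.uIcc p q, (0:ℝ) < 1 + x := by
    intro x hx
    rw [Set.uIcc_of_le hpq] at hx
    have := hx.1
    linarith
  have hlog : ∀ x ∈ Set.uIcc p q, HasDerivAt (fun y => Real.log (1 + y)) (1 / (1 + x)) x := by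
    intro x hx
    have h := (Real.hasDerivAt_log (ne_of_gt (hcont x hx))).comp x
      ((hasDerivAt_id x).const_add 1)
    simpa [one_div, Function.comp_def] using h
  have hcont2 : ContinuousOn (fun x : ℝ => (1 - x) / (1 + x)) (Set.uIcc p q) :=
    ContinuousOn.div (by fun_prop) (by fun_prop)
      (fun x hx => ne_of_gt (hcont x hx))
  have hcont1 : ContinuousOn (fun x : ℝ => x * (1 - x) / (1 + x)) (Set.uIcc p q) :=
    ContinuousOn.div (by fun_prop) (by fun_prop)
      (fun x hx => ne_of_gt (hcont x hx))
  have hI2 : (∫ x in p..q, (1 - x) / (1 + x)) = 2 * L - 2 * a := by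
    have hderiv : ∀ x ∈ Set.uIcc p q,
        HasDerivAt (fun y => 2 * Real.log (1 + y) - y) ((1 - x) / (1 + x)) x := by
      intro x hx
      have h := ((hlog x hx).const_mul 2).sub (hasDerivAt_id x)
      have hx0 := hcont x hx
      refine h.congr_deriv ?_
      field_simp
      ring
    rw [intervalIntegral.integral_eq_sub_of_hasDerivAt hderiv
      (hcont2.intervalIntegrable)]
    rw [hLval]
    simp only [hp, hq]
    ring
  have hI1 : (∫ x in p..q, x * (1 - x) / (1 + x)) = -2 * μ * a + 4 * a - 2 * L := by
    have hderiv : ∀ x ∈ Set.uIcc p q,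
        HasDerivAt (fun y => -y ^ 2 / 2 + 2 * y - 2 * Real.log (1 + y))
          (x * (1 - x) / (1 + x)) x := by
      intro x hx
      have hsq : HasDerivAt (fun y : ℝ => -y ^ 2 / 2 + 2 * y) (-x + 2) x := by
        have h1 : HasDerivAt (fun y : ℝ => y ^ 2) (2 * x) x := by
          simpa using hasDerivAt_pow 2 x
        have := (h1.neg.div_const 2).add ((hasDerivAt_id x).const_mul 2)
        refine this.congr_deriv ?_
        ring
      have h := hsq.sub ((hlog x hx).const_mul 2)
      have hx0 := hcont x hx
      refine h.congr_deriv ?_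
      field_simp
      ring
    rw [intervalIntegral.integral_eq_sub_of_hasDerivAt hderiv
      (hcont1.intervalIntegrable)]
    rw [hLval]
    simp only [hp, hq]
    ring
  rw [hI1, hI2]
  have hLa : L - a ≠ 0 := by linarith
  have h2La : 2 * L - 2 * a ≠ 0 := by intro h; apply hLa; linarith
  field_simp
  nlinarith [hδval, sq_nonneg (L - a)]
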